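/- For nonnegative integers n, m with 0 ≤ m ≤ n, one has the polynomial identity (1/(2ⁿ n!)) · (z²-1)^{m} · d^{n+m}/dz^{n+m}[(z²-1)ⁿ] = ((n+m)!/(n-m)!) · (1/(2ⁿ n!)) · d^{n-m}/dz^{n-m}[(z²-1)ⁿ]. Equivalently, (z²-1)^m · d^{n+m}/dz^{n+m}(z²-1)ⁿ = ((n+m)!/(n-m)!) · d^{n-m}/dz^{n-m}(z²-1)ⁿ. -/

import Mathlib

open Polynomial

lemma derivX21 : derivative ((X:ℚ[X])^2 - 1) = 2*X := by
  simp [derivative_X_pow]; norm_num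

lemma deriv_base (n : ℕ) :
    ((X:ℚ[X])^2 - 1) * derivative ((X^2-1)^n) = C (2*(n:ℚ)) * (X * (X^2-1)^n) := by
  cases n with
  | zero => simp
  | succ k =>
    rw [derivative_pow_succ, derivX21]
    push_cast
    simp only [map_add, map_mul, map_one, C_eq_natCast, map_ofNat]
    ring

lemma keyR (n k : ℕ) :
    ((X:ℚ[X])^2-1) * (⇑(derivative (R := ℚ)))^[k+2] ((X^2-1)^n) =
      C (2*((n:ℚ)-(k+1))) * (X * (⇑(derivative (R := ℚ)))^[k+1] ((X^2-1)^n)) +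
      C (((k:ℚ)+1)*(2*n-k)) * (⇑(derivative (R := ℚ)))^[k] ((X^2-1)^n) := by
  induction k with
  | zero =>
    have h := congrArg derivative (deriv_base n)
    simp only [derivative_mul, derivative_C_mul, derivative_sub, derivative_one, derivative_C,
      derivative_X, derivative_X_pow, derivX21] at h
    simp only [Function.iterate_succ_apply, Function.iterate_zero, Function.iterate_one, id]
    simp only [map_mul, map_sub, map_add, map_one, map_ofNat, C_eq_natCast] at h ⊢
    push_cast at h ⊢
    linear_combination h
  | succ k ih =>
    have h := congrArg derivative ih
    simp only [derivative_mul, derivative_C_mul, derivative_add, derivative_sub, derivative_one,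
      derivative_C, derivative_X, derivative_X_pow, derivX21,
      ← Function.iterate_succ_apply'] at h
    simp only [Nat.succ_eq_add_one, show k+2+1 = k+1+2 from rfl, show k+1+1+1 = k+1+2 from rfl,
      show k+1+1 = k+2 from rfl] at h ⊢
    simp only [map_mul, map_sub, map_add, map_one, map_ofNat, C_eq_natCast] at h ih ⊢
    push_cast at h ih ⊢
    linear_combination h

theorem stmt_5 (n m : ℕ) (h : m ≤ n) :
    ((X : ℚ[X]) ^ 2 - 1) ^ m * (⇑(derivative (R := ℚ)))^[n + m] ((X ^ 2 - 1) ^ n) =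
      C (((n + m).factorial : ℚ) / ((n - m).factorial : ℚ)) *
        (⇑(derivative (R := ℚ)))^[n - m] ((X ^ 2 - 1) ^ n) := by
  induction m with
  | zero =>
    simp only [pow_zero, one_mul, Nat.add_zero, Nat.sub_zero]
    rw [div_self (by exact_mod_cast n.factorial_ne_zero), map_one, one_mul]
  | succ m ih =>
    have hm : m ≤ n := Nat.le_of_succ_le h
    have hS := ih hm
    obtain ⟨k, hk⟩ : ∃ k, n - m = k + 1 := ⟨n - m - 1, by omega⟩
    have hkq : (k:ℚ) + 1 = (n:ℚ) - m := by
      have h2 := congrArg (Nat.cast : ℕ → ℚ) hk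
      rw [Nat.cast_sub hm] at h2
      push_cast at h2
      linarith
    -- differentiate hS
    have hd := congrArg derivative hS
    simp only [derivative_mul, derivative_C_mul, derivative_pow, derivX21,
      ← Function.iterate_succ_apply'] at hd
    rw [hk] at hS hd
    simp only [Nat.succ_eq_add_one, derivative_C, zero_mul, zero_add, show k+1+1 = k+2 from rfl] at hd
    -- key relation
    have hR := keyR n k
    rw [show 2*((n:ℚ)-((k:ℚ)+1)) = 2*(m:ℚ) by linarith] at hR
    -- pow bookkeeping
    have hp : (C (m:ℚ)) * (((X:ℚ[X])^2-1)^(m-1) * ((X:ℚ[X])^2-1)) =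
        (C (m:ℚ)) * ((X:ℚ[X])^2-1)^m := by
      cases m with
      | zero => simp
      | succ j => rw [← pow_succ]; simp
    -- constant bookkeeping
    have hcC : (C (((n + m + 1).factorial : ℚ) / (k.factorial : ℚ)) : ℚ[X]) =
        C (((n + m).factorial : ℚ) / ((k+1).factorial : ℚ)) * C (((k:ℚ)+1)*(2*(n:ℚ)-k)) := by
      rw [← map_mul]
      congr 1
      rw [Nat.factorial_succ, Nat.factorial_succ]
      have hk2 : (2*(n:ℚ)-k) = ((n+m)+1 : ℕ) := by push_cast; linarith
      rw [hk2]
      have h1 : (k.factorial : ℚ) ≠ 0 := by exact_mod_cast k.factorial_ne_zero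
      have h2 : ((k:ℚ)+1) ≠ 0 := by positivity
      push_cast
      field_simp
    rw [show n + (m+1) = n+m+1 from by omega, show n - (m+1) = k from by omega, hcC]
    simp only [map_mul, map_add, map_sub, map_one, map_ofNat, C_eq_natCast] at hR hd hp hS ⊢
    linear_combination (((X:ℚ[X])^2-1)) * hd - (2*X*(⇑(derivative (R := ℚ)))^[n+m] (((X:ℚ[X])^2-1)^n)) * hp
      - (2*((m:ℚ[X]))*X) * hS + (C (((n + m).factorial : ℚ) / ((k+1).factorial : ℚ))) * hR
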